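/- Let α : K → ℤ be fixed A-values on a finite key set K, and let β_S, β_T : K → ℤ. If there is a diff from β_S to β_T under the family F(R,+) of cost m, then there is a diff from β_S to β_T of cost at most 2m using only operations with at-most conditions and increment modifiers, i.e., operations of the form (A ≤ a, B ← B + b). -/

import Mathlib

open scoped Classical

/-- An operation of the family `F(R,+)`: reals `a ≤ z` and an increment `b`, with condition
`A ∈ [a, z]` and modifier `B ← B + b`. -/
structure OpRangeAdd where
  a : ℝ
  z : ℝ
  hle : a ≤ z
  b : ℝ

/-- The condition of an operation of `F(R,+)`, evaluated on an `A`-value `v`. -/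
def OpRangeAdd.cond (f : OpRangeAdd) (v : ℤ) : Prop :=
  f.a ≤ (v : ℝ) ∧ (v : ℝ) ≤ f.z

/-- Applying an operation of `F(R,+)`: every key whose `A`-value lies in `[a, z]` gets its
`B`-value incremented by `b`; other keys are unchanged. -/
noncomputable def OpRangeAdd.apply {K : Type*} (α : K → ℤ) (f : OpRangeAdd) (β : K → ℝ) :
    K → ℝ :=
  fun k => if f.cond (α k) then β k + f.b else β k

/-- Successive application of a finite sequence of operations of `F(R,+)`. -/
noncomputable def applyOpsRangeAdd {K : Type*} (α : K → ℤ) (L : List OpRangeAdd)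
    (β : K → ℝ) : K → ℝ :=
  L.foldl (fun β' f => f.apply α β') β

/-- `L` is a diff from `βS` to `βT` under `F(R,+)`. -/
def IsDiffRangeAdd {K : Type*} (α : K → ℤ) (L : List OpRangeAdd) (βS βT : K → ℝ) : Prop :=
  applyOpsRangeAdd α L βS = βT

/-- `L` is a best diff under `F(R,+)`: a diff of minimum cost (number of operations). -/
def IsBestDiffRangeAdd {K : Type*} (α : K → ℤ) (L : List OpRangeAdd) (βS βT : K → ℝ) :
    Prop :=
  IsDiffRangeAdd α L βS βT ∧
    ∀ L' : List OpRangeAdd, IsDiffRangeAdd α L' βS βT → L.length ≤ L'.length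

/-- An operation with an at-most condition and an increment modifier:
`(A ≤ a, B ← B + b)`. -/
structure OpLeqAdd where
  a : ℝ
  b : ℝ

/-- Applying an at-most/increment operation: every key `k` with `α k ≤ a` gets its
`B`-value incremented by `b`. -/
noncomputable def OpLeqAdd.apply {K : Type*} (α : K → ℤ) (f : OpLeqAdd) (β : K → ℝ) :
    K → ℝ :=
  fun k => if (α k : ℝ) ≤ f.a then β k + f.b else β k

/-- Successive application of a finite sequence of at-most/increment operations. -/
noncomputable def applyOpsLeqAdd {K : Type*} (α : K → ℤ) (L : List OpLeqAdd) (β : K → ℝ) :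
    K → ℝ :=
  L.foldl (fun β' f => f.apply α β') β

/-- `L` is a diff from `βS` to `βT` using only at-most/increment operations. -/
def IsDiffLeqAdd {K : Type*} (α : K → ℤ) (L : List OpLeqAdd) (βS βT : K → ℝ) : Prop :=
  applyOpsLeqAdd α L βS = βT

/-- Translate a range/add operation into two at-most/add operations. -/
noncomputable def OpRangeAdd.toLeq (f : OpRangeAdd) : List OpLeqAdd :=
  [⟨f.z, f.b⟩, ⟨((⌈f.a⌉ : ℤ) - 1 : ℤ), -f.b⟩]

lemma toLeq_apply {K : Type*} (α : K → ℤ) (f : OpRangeAdd) (β : K → ℝ) :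
    applyOpsLeqAdd α f.toLeq β = f.apply α β := by
  funext k
  have hceil : ((α k : ℝ) ≤ ((⌈f.a⌉ - 1 : ℤ) : ℝ)) ↔ ((α k : ℝ) < f.a) := by
    constructor
    · intro hh
      have h2 : ((α k : ℤ) : ℝ) ≤ ((⌈f.a⌉ - 1 : ℤ) : ℝ) := hh
      have h3 : (α k : ℤ) ≤ ⌈f.a⌉ - 1 := by exact_mod_cast h2
      have h4 : ((α k : ℝ)) ≤ (⌈f.a⌉ : ℝ) - 1 := by exact_mod_cast h3
      have := Int.ceil_lt_add_one f.a
      linarith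
    · intro hh
      have h1 : (α k : ℤ) < ⌈f.a⌉ := Int.lt_ceil.mpr hh
      have h3 : (α k : ℤ) ≤ ⌈f.a⌉ - 1 := by omega
      exact_mod_cast h3
  simp only [applyOpsLeqAdd, List.foldl, OpRangeAdd.toLeq, OpLeqAdd.apply,
    OpRangeAdd.apply]
  by_cases h1 : (α k : ℝ) ≤ f.z <;> by_cases h2 : (α k : ℝ) < f.a
  · -- below range: both ops fire, cancel
    rw [if_pos (hceil.mpr h2), if_pos h1, if_neg (show ¬ f.cond (α k) by rintro ⟨ha, -⟩; linarith)]
    ring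
  · -- in range
    rw [if_neg (fun hc => h2 (hceil.mp hc)), if_pos h1,
        if_pos (show f.cond (α k) from ⟨le_of_not_gt h2, h1⟩)]
  · -- impossible: α k > z but α k < a ≤ z
    exact absurd (lt_of_lt_of_le h2 f.hle) (fun hh => h1 (le_of_lt hh))
  · -- above range: nothing fires
    rw [if_neg (fun hc => h2 (hceil.mp hc)), if_neg h1,
        if_neg (show ¬ f.cond (α k) by rintro ⟨-, hz⟩; exact h1 hz)]

lemma applyOps_bind {K : Type*} (α : K → ℤ) (L : List OpRangeAdd) (β : K → ℝ) :
    applyOpsLeqAdd α (L.flatMap OpRangeAdd.toLeq) β = applyOpsRangeAdd α L β := by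
  induction L generalizing β with
  | nil => rfl
  | cons f L ih =>
      have key : applyOpsLeqAdd α ((f :: L).flatMap OpRangeAdd.toLeq) β
          = applyOpsLeqAdd α (L.flatMap OpRangeAdd.toLeq)
              (applyOpsLeqAdd α f.toLeq β) := by
        simp only [List.flatMap_cons, applyOpsLeqAdd, List.foldl_append]
      rw [key, toLeq_apply]
      exact ih _

/-- If there is a diff from `β_S` to `β_T` under `F(R,+)` of cost `m`, then there is a
diff from `β_S` to `β_T` of cost at most `2m` using only operations with at-most
conditions and increment modifiers. -/
theorem exists_atMost_diff_of_range_diff {K : Type*} [Fintype K] (α : K → ℤ)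
    (βS βT : K → ℤ) (m : ℕ)
    (h : ∃ L : List OpRangeAdd,
      IsDiffRangeAdd α L (fun k => (βS k : ℝ)) (fun k => (βT k : ℝ)) ∧ L.length = m) :
    ∃ L' : List OpLeqAdd,
      IsDiffLeqAdd α L' (fun k => (βS k : ℝ)) (fun k => (βT k : ℝ)) ∧
      L'.length ≤ 2 * m := by
  obtain ⟨L, hL, hm⟩ := h
  refine ⟨L.flatMap OpRangeAdd.toLeq, ?_, ?_⟩
  · unfold IsDiffLeqAdd
    rw [applyOps_bind]
    exact hL
  · calc (L.flatMap OpRangeAdd.toLeq).length ≤ L.length * 2 := by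
          rw [List.length_flatMap]
          apply le_trans (List.sum_le_card_nsmul _ 2 ?_)
          · simp [List.length_map]
          · intro x hx
            simp only [List.mem_map] at hx
            obtain ⟨f, _, rfl⟩ := hx
            simp [OpRangeAdd.toLeq]
      _ = 2 * m := by rw [hm]; ring
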